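/- If p₁, …, pₙ are distinct primes, m = p₁⋯pₙ and mᵢ = m/pᵢ, then there exist polynomials s₁, …, sₙ ∈ ℤ[x] with ∑ᵢ sᵢ(x)·F_{mᵢ}(x) = 1, where F_k(x) = 1 + x + ⋯ + x^{k-1}. -/

import Mathlib

open Polynomial

private noncomputable def G (k : ℕ) : ℤ[X] := ∑ j ∈ Finset.range k, X ^ j

private lemma G_add (a b : ℕ) : G (a + b) = G a + X ^ a * G b := by
  induction b with
  | zero => simp [G]
  | succ b ih =>
    have h1 : G ((a + b) + 1) = G (a + b) + X ^ (a + b) := by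
      simp [G, Finset.sum_range_succ]
    have h2 : G (b + 1) = G b + X ^ b := by
      simp [G, Finset.sum_range_succ]
    rw [Nat.add_succ, h1, ih, h2]
    ring

private lemma mem_step (I : Ideal ℤ[X]) {b : ℕ} (hb : G b ∈ I) (k : ℕ)
    (h : G (k + b) ∈ I) : G k ∈ I := by
  have hk : G k = G (k + b) - X ^ k * G b := by rw [G_add]; ring
  rw [hk]
  exact Ideal.sub_mem _ h (Ideal.mul_mem_left _ _ hb)

private lemma mem_mod (I : Ideal ℤ[X]) {a b : ℕ} (ha : G a ∈ I) (hb : G b ∈ I) :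
    G (a % b) ∈ I := by
  have key : ∀ q r, G (r + b * q) ∈ I → G r ∈ I := by
    intro q
    induction q with
    | zero => simpa
    | succ q ih =>
      intro r hr
      apply ih
      apply mem_step I hb
      have : r + b * (q + 1) = (r + b * q) + b := by ring
      rwa [this] at hr
  exact key (a / b) (a % b) (by rwa [Nat.mod_add_div])

private lemma mem_gcd (I : Ideal ℤ[X]) (a b : ℕ) (ha : G a ∈ I) (hb : G b ∈ I) :
    G (Nat.gcd a b) ∈ I := by
  induction a, b using Nat.gcd.induction with
  | H0 n => simpa using hb
  | H1 m n hm ih =>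
    rw [Nat.gcd_rec]
    exact ih (mem_mod I hb ha) ha

theorem geom_sum_coprime_combination (n : ℕ) (hn : 0 < n) (p : Fin n → ℕ)
    (hp : ∀ i, (p i).Prime) (hdist : Function.Injective p)
    (m : ℕ) (hm : m = ∏ i, p i) :
    ∃ s : Fin n → ℤ[X],
      ∑ i, s i * (∑ j ∈ Finset.range (m / p i), X ^ j) = 1 := by
  set I : Ideal ℤ[X] := Ideal.span (Set.range fun i : Fin n => G (m / p i)) with hI
  have hGi : ∀ i, G (m / p i) ∈ I := fun i => Ideal.subset_span ⟨i, rfl⟩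
  have hmdiv : ∀ j, m / p j = ∏ i ∈ Finset.univ.erase j, p i := by
    intro j
    rw [hm, ← Finset.mul_prod_erase Finset.univ p (Finset.mem_univ j),
      Nat.mul_div_cancel_left _ (hp j).pos]
  have hgcdI : ∀ s : Finset (Fin n), G (s.gcd (fun i => m / p i)) ∈ I := by
    intro s
    induction s using Finset.induction with
    | empty => simpa [Finset.gcd_empty, G] using I.zero_mem
    | insert _ _ h ih =>
      rw [Finset.gcd_insert]
      exact mem_gcd I _ _ (hGi _) ih
  have hone : Finset.univ.gcd (fun i => m / p i) = 1 := by
    by_contra h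
    set d := Finset.univ.gcd (fun i => m / p i) with hd
    have hq : (d.minFac).Prime := Nat.minFac_prime h
    set q := d.minFac with hqdef
    have hqall : ∀ i, q ∣ m / p i := fun i =>
      dvd_trans (Nat.minFac_dvd d) (Finset.gcd_dvd (Finset.mem_univ i))
    have hqm : q ∣ m := by
      have i0 : Fin n := ⟨0, hn⟩
      exact (hqall i0).trans (Nat.div_dvd_of_dvd (by
        rw [hm]; exact Finset.dvd_prod_of_mem p (Finset.mem_univ i0)))
    have hqm' : q ∣ ∏ i, p i := hm ▸ hqm
    obtain ⟨j, _, hqj⟩ := hq.prime.exists_mem_finset_dvd hqm'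
    have hqpj : q = p j := (Nat.prime_dvd_prime_iff_eq hq (hp j)).mp hqj
    have hqj' : q ∣ ∏ i ∈ Finset.univ.erase j, p i := (hmdiv j) ▸ hqall j
    obtain ⟨i, hi, hqi⟩ := hq.prime.exists_mem_finset_dvd hqj'
    have hqpi : q = p i := (Nat.prime_dvd_prime_iff_eq hq (hp i)).mp hqi
    exact (Finset.mem_erase.mp hi).1 (hdist (hqpj ▸ hqpi)).symm
  have h1 : (1 : ℤ[X]) ∈ I := by
    have := hgcdI Finset.univ
    rw [hone] at this
    simpa [G] using this
  rw [hI, Ideal.span, Submodule.mem_span_range_iff_exists_fun] at h1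
  obtain ⟨c, hc⟩ := h1
  exact ⟨c, by simpa [G, smul_eq_mul] using hc⟩
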